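/- Fix κ₁>0, κ₋₁>0, K>0, z_V>0 and let F(z_V,z_C) = −(1/κ₁)[ln(z_C⁺(K,z_V) − z_C) − (1/2)ln(D(K,z_V)) + ln(κ₁)] for z_C ≤ z_V. Then there exists a constant C > 0 (depending only on κ₁, κ₋₁, K) such that |F(z_V,z_C)| ≤ C(1 + ln(1 + z_V + z_C)) for all 0 ≤ z_C ≤ z_V. -/
import Mathlib

set_option maxHeartbeats 1600000 in
theorem poisson_solution_log_growth
    (κ1 κm1 K : ℝ) (hκ1 : 0 < κ1) (hκm1 : 0 < κm1) (hK : 0 < K) :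
    ∃ C : ℝ, 0 < C ∧ ∀ zV : ℝ, 0 < zV → ∀ zC : ℝ, 0 ≤ zC → zC ≤ zV →
      |-(1 / κ1) *
          (Real.log ((((zV + K) * κ1 + κm1 +
              Real.sqrt (((zV + K) * κ1 + κm1) ^ 2 - 4 * κ1 ^ 2 * zV * K)) / (2 * κ1)) - zC)
            - (1 / 2) * Real.log (((zV + K) * κ1 + κm1) ^ 2 - 4 * κ1 ^ 2 * zV * K)
            + Real.log κ1)|
        ≤ C * (1 + Real.log (1 + zV + zC)) := by
  have hκ1' : κ1 ≠ 0 := ne_of_gt hκ1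
  obtain ⟨M1, hM1def⟩ : ∃ m : ℝ, m = 1 + K + κm1 / κ1 := ⟨_, rfl⟩
  obtain ⟨M2, hM2def⟩ : ∃ m : ℝ, m = κ1 * (1 + K) + κm1 := ⟨_, rfl⟩
  have hM1pos : 0 < M1 := by rw [hM1def]; positivity
  have hM2pos : 0 < M2 := by rw [hM2def]; positivity
  obtain ⟨S, hSdef⟩ : ∃ s : ℝ, s = |Real.log M1| + |Real.log M2| + |Real.log κm1| + |Real.log κ1| := ⟨_, rfl⟩
  have hS0 : 0 ≤ S := by rw [hSdef]; positivity
  refine ⟨(2 + S) / κ1, by positivity, ?_⟩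
  intro zV hzV zC hzC0 hzCV
  set A : ℝ := (zV + K) * κ1 + κm1 with hAdef
  have hApos : 0 < A := by positivity
  set D : ℝ := A ^ 2 - 4 * κ1 ^ 2 * zV * K with hDdef
  have hDlb : κm1 ^ 2 ≤ D := by
    rw [hDdef, hAdef]
    nlinarith [sq_nonneg ((zV - K) * κ1), mul_pos (mul_pos hzV hκ1) hκm1,
      mul_pos (mul_pos hK hκ1) hκm1]
  have hDpos : 0 < D := lt_of_lt_of_le (by positivity) hDlb
  have hsD_ub : Real.sqrt D ≤ A := by
    have h1 : D ≤ A ^ 2 := by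
      rw [hDdef]; nlinarith [mul_pos (mul_pos (mul_pos hκ1 hκ1) hzV) hK]
    calc Real.sqrt D ≤ Real.sqrt (A ^ 2) := Real.sqrt_le_sqrt h1
      _ = A := by rw [Real.sqrt_sq hApos.le]
  have hsD_key : (zV - K) * κ1 + κm1 ≤ Real.sqrt D := by
    have h1 : ((zV - K) * κ1 + κm1) ^ 2 ≤ D := by
      rw [hDdef, hAdef]; nlinarith [mul_pos (mul_pos hK hκ1) hκm1]
    calc (zV - K) * κ1 + κm1 ≤ |(zV - K) * κ1 + κm1| := le_abs_self _
      _ = Real.sqrt (((zV - K) * κ1 + κm1) ^ 2) := (Real.sqrt_sq_eq_abs _).symm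
      _ ≤ Real.sqrt D := Real.sqrt_le_sqrt h1
  set zp : ℝ := (A + Real.sqrt D) / (2 * κ1) with hzpdef
  have hzp2 : zp * (2 * κ1) = A + Real.sqrt D := by
    rw [hzpdef]; field_simp
  have hu_lb : κm1 / κ1 ≤ zp - zC := by
    rw [div_le_iff₀ hκ1]
    nlinarith [hzp2, hsD_key, mul_le_mul_of_nonneg_right hzCV hκ1.le]
  have hu_pos : 0 < zp - zC := lt_of_lt_of_le (by positivity) hu_lb
  have hzpA : zp * κ1 ≤ A := by nlinarith [hzp2, hsD_ub]
  have hAκ : (zV + K + κm1 / κ1) * κ1 = A := by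
    rw [hAdef]; field_simp
  have hzp_ub : zp ≤ zV + K + κm1 / κ1 :=
    le_of_mul_le_mul_right (by rw [hAκ]; exact hzpA) hκ1
  have hu_ub : zp - zC ≤ (1 + zV) * M1 := by
    have h2 : zV + K + κm1 / κ1 ≤ (1 + zV) * M1 := by
      rw [hM1def]
      nlinarith [mul_nonneg hzV.le hK.le, mul_nonneg hzV.le (div_nonneg hκm1.le hκ1.le)]
    linarith
  have hx0 : 0 ≤ Real.log (1 + zV) := Real.log_nonneg (by linarith)
  have hL1ub : Real.log (zp - zC) ≤ Real.log (1 + zV) + Real.log M1 := by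
    calc Real.log (zp - zC) ≤ Real.log ((1 + zV) * M1) :=
          Real.log_le_log hu_pos hu_ub
      _ = _ := Real.log_mul (by positivity) (ne_of_gt hM1pos)
  have hL1lb : Real.log κm1 - Real.log κ1 ≤ Real.log (zp - zC) := by
    calc Real.log κm1 - Real.log κ1 = Real.log (κm1 / κ1) :=
          (Real.log_div (ne_of_gt hκm1) hκ1').symm
      _ ≤ _ := Real.log_le_log (by positivity) hu_lb
  have hAub : A ≤ (1 + zV) * M2 := by
    rw [hAdef, hM2def]
    nlinarith [mul_nonneg hzV.le hκm1.le, mul_nonneg (mul_nonneg hzV.le hκ1.le) hK.le]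
  have hDub : D ≤ ((1 + zV) * M2) ^ 2 := by
    have h1 : D ≤ A ^ 2 := by
      rw [hDdef]; nlinarith [mul_pos (mul_pos (mul_pos hκ1 hκ1) hzV) hK]
    nlinarith [hAub, hApos]
  have hLDub : Real.log D ≤ 2 * (Real.log (1 + zV) + Real.log M2) := by
    calc Real.log D ≤ Real.log (((1 + zV) * M2) ^ 2) := Real.log_le_log hDpos hDub
      _ = 2 * Real.log ((1 + zV) * M2) := by
          rw [Real.log_pow]; push_cast; ring
      _ = _ := by rw [Real.log_mul (by positivity) (ne_of_gt hM2pos)]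
  have hLDlb : 2 * Real.log κm1 ≤ Real.log D := by
    calc (2 : ℝ) * Real.log κm1 = Real.log (κm1 ^ 2) := by
          rw [Real.log_pow]; push_cast; ring
      _ ≤ Real.log D := Real.log_le_log (by positivity) hDlb
  have hxL : Real.log (1 + zV) ≤ Real.log (1 + zV + zC) :=
    Real.log_le_log (by linarith) (by linarith)
  have hL0 : 0 ≤ Real.log (1 + zV + zC) := Real.log_nonneg (by linarith)
  have hyabs : |Real.log (zp - zC) - 1 / 2 * Real.log D + Real.log κ1|
      ≤ (2 + S) * (1 + Real.log (1 + zV)) := by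
    have hb1 : 0 ≤ |Real.log M1| := abs_nonneg _
    have hb2 : 0 ≤ |Real.log M2| := abs_nonneg _
    have hb3 : 0 ≤ |Real.log κm1| := abs_nonneg _
    have hb4 : 0 ≤ |Real.log κ1| := abs_nonneg _
    have ha1 : Real.log M1 ≤ |Real.log M1| := le_abs_self _
    have ha1' : -|Real.log M1| ≤ Real.log M1 := neg_abs_le _
    have ha2 : Real.log M2 ≤ |Real.log M2| := le_abs_self _
    have ha2' : -|Real.log M2| ≤ Real.log M2 := neg_abs_le _
    have ha3 : Real.log κm1 ≤ |Real.log κm1| := le_abs_self _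
    have ha3' : -|Real.log κm1| ≤ Real.log κm1 := neg_abs_le _
    have ha4 : Real.log κ1 ≤ |Real.log κ1| := le_abs_self _
    have ha4' : -|Real.log κ1| ≤ Real.log κ1 := neg_abs_le _
    have hSx : 0 ≤ (|Real.log M1| + |Real.log M2| + |Real.log κm1| + |Real.log κ1|) * Real.log (1 + zV) :=
      mul_nonneg (by positivity) hx0
    rw [hSdef, abs_le]
    constructor
    · nlinarith
    · nlinarith
  rw [abs_mul, abs_neg, abs_of_pos (show (0:ℝ) < 1 / κ1 by positivity)]
  calc 1 / κ1 * |Real.log (zp - zC) - 1 / 2 * Real.log D + Real.log κ1|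
      ≤ 1 / κ1 * ((2 + S) * (1 + Real.log (1 + zV))) :=
        mul_le_mul_of_nonneg_left hyabs (by positivity)
    _ ≤ 1 / κ1 * ((2 + S) * (1 + Real.log (1 + zV + zC))) := by
        have h : (2 + S) * (1 + Real.log (1 + zV)) ≤ (2 + S) * (1 + Real.log (1 + zV + zC)) :=
          mul_le_mul_of_nonneg_left (by linarith) (by positivity)
        exact mul_le_mul_of_nonneg_left h (by positivity)
    _ = (2 + S) / κ1 * (1 + Real.log (1 + zV + zC)) := by ring
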